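/- Let $f: \{0,1\}^n \to \mathbb{R}$ with $\|f\|_1 = \mathbb{E}_x[|f(x)|] = 1$ and $\|f\|_\infty \leq M$ for some $M \geq 2$. Then $\sum_{|w|=2} \hat{f}(w)^2 \leq C(\log M)^2$ for some universal constant $C > 0$. -/

import Mathlib

open Finset

/-- The Fourier coefficient `f̂(w) = 𝔼_x[(-1)^{w·x} f(x)]` of `f : {0,1}ⁿ → ℝ`. -/
noncomputable def boolFourier {n : ℕ} (f : (Fin n → Bool) → ℝ) (w : Fin n → Bool) : ℝ :=
  (∑ x : Fin n → Bool, (-1 : ℝ) ^ (univ.filter fun i => w i && x i).card * f x) / 2 ^ n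

/-- The Hamming weight of `w ∈ {0,1}ⁿ`. -/
def hammingWt {n : ℕ} (w : Fin n → Bool) : ℕ := (univ.filter fun i => w i = true).card

noncomputable def chi {n : ℕ} (w x : Fin n → Bool) : ℝ :=
  (-1 : ℝ) ^ (univ.filter fun i => w i && x i).card

lemma chi_cons {n : ℕ} (b s : Bool) (w x : Fin n → Bool) :
    chi (Fin.cons b w) (Fin.cons s x) = (if b && s then (-1:ℝ) else 1) * chi w x := by
  unfold chi
  rw [Finset.card_filter, Finset.card_filter, Fin.sum_univ_succ]
  simp only [Fin.cons_zero, Fin.cons_succ]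
  rw [pow_add]
  congr 1
  cases b <;> cases s <;> simp

lemma hammingWt_cons {n : ℕ} (b : Bool) (w : Fin n → Bool) :
    hammingWt (Fin.cons b w) = (if b then 1 else 0) + hammingWt w := by
  unfold hammingWt
  rw [Finset.card_filter, Finset.card_filter, Fin.sum_univ_succ]
  simp only [Fin.cons_zero, Fin.cons_succ]


lemma sum_cube_succ {n : ℕ} (F : (Fin (n+1) → Bool) → ℝ) :
    ∑ x : Fin (n+1) → Bool, F x
      = ∑ x : Fin n → Bool, F (Fin.cons false x) + ∑ x : Fin n → Bool, F (Fin.cons true x) := by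
  rw [← (Fin.consEquiv (fun _ => Bool)).sum_comp (g := F)]
  rw [Fintype.sum_prod_type_right]
  simp only [Fin.consEquiv, Equiv.coe_fn_mk]
  simp only [Fintype.sum_bool]
  rw [Finset.sum_add_distrib]
  ring

lemma sum_chi_mul_chi {n : ℕ} : ∀ w v : Fin n → Bool,
    ∑ x : Fin n → Bool, chi w x * chi v x = if w = v then (2:ℝ)^n else 0 := by
  induction n with
  | zero =>
    intro w v
    have h : w = v := Subsingleton.elim _ _
    subst h
    simp [chi]
  | succ n ih =>
    intro w v
    obtain ⟨a, w', rfl⟩ : ∃ a w', w = Fin.cons a w' :=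
      ⟨w 0, Fin.tail w, (Fin.cons_self_tail w).symm⟩
    obtain ⟨b, v', rfl⟩ : ∃ b v', v = Fin.cons b v' :=
      ⟨v 0, Fin.tail v, (Fin.cons_self_tail v).symm⟩
    rw [sum_cube_succ (fun x => chi (Fin.cons a w') x * chi (Fin.cons b v') x)]
    simp only [chi_cons]
    by_cases hwv : w' = v' <;>
      cases a <;> cases b <;>
      simp [hwv, ih, Fin.cons_inj, mul_sum, pow_succ, mul_comm, mul_assoc, mul_left_comm] <;> ring

lemma choose_two_mul_le (k : ℕ) : ∀ j, j ≤ k → (2*k).choose (2*j) ≤ (2*k-1)^j * k.choose j := by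
  intro j
  induction j with
  | zero => simp
  | succ j ihj =>
    intro hk
    have hj : j ≤ k := Nat.le_of_succ_le hk
    have h1 : (2*k).choose (2*j+1) * (2*j+1) = (2*k).choose (2*j) * (2*k - 2*j) :=
      Nat.choose_succ_right_eq _ _
    have h2 : (2*k).choose (2*j+2) * (2*j+2) = (2*k).choose (2*j+1) * (2*k - (2*j+1)) :=
      Nat.choose_succ_right_eq _ _
    have h3 : k.choose (j+1) * (j+1) = k.choose j * (k - j) := Nat.choose_succ_right_eq _ _
    have key : (2*k).choose (2*j+2) * ((2*j+2)*(2*j+1))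
        ≤ ((2*k-1)^(j+1) * k.choose (j+1)) * ((2*j+2)*(2*j+1)) := by
      calc (2*k).choose (2*j+2) * ((2*j+2)*(2*j+1))
          = ((2*k).choose (2*j+2) * (2*j+2))*(2*j+1) := by ring
        _ = ((2*k).choose (2*j+1) * (2*j+1)) * (2*k - (2*j+1)) := by rw [h2]; ring
        _ = (2*k).choose (2*j) * (2*k - 2*j) * (2*k - (2*j+1)) := by rw [h1]
        _ ≤ ((2*k-1)^j * k.choose j) * (2*k - 2*j) * (2*k - (2*j+1)) :=
            Nat.mul_le_mul_right _ (Nat.mul_le_mul_right _ (ihj hj))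
        _ = (2*k-1)^j * ((k.choose j * (k-j)) * 2) * (2*k - (2*j+1)) := by
            have h4 : 2*k - 2*j = 2*(k-j) := by omega
            rw [h4]; ring
        _ = (2*k-1)^j * (k.choose (j+1) * (j+1) * 2) * (2*k - (2*j+1)) := by rw [h3]
        _ ≤ (2*k-1)^j * (k.choose (j+1) * (j+1) * 2) * ((2*k-1)*(2*j+1)) := by
            apply Nat.mul_le_mul_left
            calc 2*k - (2*j+1) ≤ 2*k - 1 := by omega
              _ ≤ (2*k-1)*(2*j+1) := Nat.le_mul_of_pos_right _ (by omega)
        _ = ((2*k-1)^(j+1) * k.choose (j+1)) * ((2*j+2)*(2*j+1)) := by ring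
    exact Nat.le_of_mul_le_mul_right key (by positivity)

lemma two_point (k : ℕ) (a b : ℝ) :
    (a+b)^(2*k) + (a-b)^(2*k) ≤ 2 * (a^2 + ((2*k-1 : ℕ) : ℝ) * b^2)^k := by
  have e1 : (a+b)^(2*k)
      = ∑ i ∈ range (2*k+1), b^i * a^(2*k-i) * ((2*k).choose i : ℝ) := by
    rw [add_comm a b, add_pow]
  have e2 : (a-b)^(2*k)
      = ∑ i ∈ range (2*k+1), (-b)^i * a^(2*k-i) * ((2*k).choose i : ℝ) := by
    rw [sub_eq_neg_add, add_pow]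
  set h : ℕ → ℝ := fun i => (b^i + (-b)^i) * a^(2*k-i) * ((2*k).choose i : ℝ) with hh
  have hsum : (a+b)^(2*k) + (a-b)^(2*k) = ∑ i ∈ range (2*k+1), h i := by
    rw [e1, e2, ← Finset.sum_add_distrib]
    exact Finset.sum_congr rfl (fun i _ => by simp [hh]; ring)
  set s : Finset ℕ := (range (k+1)).image (fun j => 2*j) with hs
  have hsub : s ⊆ range (2*k+1) := by
    intro i hi
    simp only [hs, Finset.mem_image, Finset.mem_range] at hi ⊢
    obtain ⟨j, hj, rfl⟩ := hi; omega
  have hzero : ∀ i ∈ range (2*k+1), i ∉ s → h i = 0 := by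
    intro i hi his
    have hodd : Odd i := by
      rcases Nat.even_or_odd i with he | ho
      · exfalso; apply his
        obtain ⟨j, rfl⟩ := he
        simp only [hs, Finset.mem_image, Finset.mem_range] at hi ⊢
        exact ⟨j, by omega, by ring⟩
      · exact ho
    have : (-b)^i = -(b^i) := hodd.neg_pow b
    simp [hh, this]
  have himg : ∑ i ∈ s, h i = ∑ j ∈ range (k+1), h (2*j) :=
    Finset.sum_image (fun a _ b _ hab => by omega)
  have hterm : ∀ j ∈ range (k+1),
      h (2*j) ≤ 2 * (((2*k-1)^j * k.choose j : ℕ) : ℝ) * (b^2)^j * (a^2)^(k-j) := by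
    intro j hj
    have hjk : j ≤ k := by simpa using Nat.lt_succ_iff.mp (Finset.mem_range.mp hj)
    have heven : (-b)^(2*j) = b^(2*j) := by
      rw [neg_pow, pow_mul]; simp
    have hexp : 2*k - 2*j = 2*(k-j) := by omega
    have hb : b^(2*j) = (b^2)^j := by rw [pow_mul]
    have ha : a^(2*k-2*j) = (a^2)^(k-j) := by rw [hexp, pow_mul]
    have hpos : (0:ℝ) ≤ (b^2)^j * (a^2)^(k-j) := by positivity
    calc h (2*j) = 2 * ((2*k).choose (2*j) : ℝ) * ((b^2)^j * (a^2)^(k-j)) := by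
          simp only [hh, heven, hb, ha]; ring
      _ ≤ 2 * (((2*k-1)^j * k.choose j : ℕ) : ℝ) * ((b^2)^j * (a^2)^(k-j)) := by
          apply mul_le_mul_of_nonneg_right _ hpos
          have := choose_two_mul_le k j hjk
          have : ((2*k).choose (2*j) : ℝ) ≤ (((2*k-1)^j * k.choose j : ℕ) : ℝ) := by
            exact_mod_cast this
          linarith
      _ = 2 * (((2*k-1)^j * k.choose j : ℕ) : ℝ) * (b^2)^j * (a^2)^(k-j) := by ring
  have hrhs : 2 * (a^2 + ((2*k-1 : ℕ) : ℝ) * b^2)^k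
      = ∑ j ∈ range (k+1), 2 * (((2*k-1)^j * k.choose j : ℕ) : ℝ) * (b^2)^j * (a^2)^(k-j) := by
    rw [add_comm (a^2), add_pow, Finset.mul_sum]
    refine Finset.sum_congr rfl (fun j _ => ?_)
    push_cast
    ring
  rw [hsum, ← Finset.sum_subset hsub hzero, himg, hrhs]
  exact Finset.sum_le_sum hterm

lemma holder_pow {ι : Type*} [Fintype ι] (u v : ι → ℝ) (hu : ∀ i, 0 ≤ u i) (hv : ∀ i, 0 ≤ v i)
    {k j : ℕ} (hk : 0 < k) (hj : j ≤ k) :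
    (∑ i, u i ^ (k-j) * v i ^ j) ^ k ≤ (∑ i, u i ^ k) ^ (k-j) * (∑ i, v i ^ k) ^ j := by
  rcases Nat.eq_zero_or_pos j with rfl | hj0
  · simp
  rcases eq_or_lt_of_le hj with rfl | hjk
  · simp [Nat.sub_self]
  have hkj0 : 0 < k - j := by omega
  set U := ∑ i, u i ^ k with hU
  set V := ∑ i, v i ^ k with hV
  have hUnn : 0 ≤ U := sum_nonneg fun i _ => pow_nonneg (hu i) k
  have hVnn : 0 ≤ V := sum_nonneg fun i _ => pow_nonneg (hv i) k
  rcases eq_or_lt_of_le hUnn with hU0 | hUpos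
  · have hu0 : ∀ i ∈ univ, u i ^ k = 0 :=
      (Finset.sum_eq_zero_iff_of_nonneg (fun i _ => pow_nonneg (hu i) k)).mp hU0.symm
    have hz : ∀ i ∈ (univ : Finset ι), u i ^ (k-j) * v i ^ j = 0 := by
      intro i hi
      have : u i = 0 := pow_eq_zero_iff hk.ne' |>.mp (hu0 i hi)
      rw [this, zero_pow hkj0.ne', zero_mul]
    rw [Finset.sum_eq_zero hz, ← hU0, zero_pow hk.ne', zero_pow hkj0.ne', zero_mul]
  rcases eq_or_lt_of_le hVnn with hV0 | hVpos
  · have hv0 : ∀ i ∈ univ, v i ^ k = 0 :=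
      (Finset.sum_eq_zero_iff_of_nonneg (fun i _ => pow_nonneg (hv i) k)).mp hV0.symm
    have hz : ∀ i ∈ (univ : Finset ι), u i ^ (k-j) * v i ^ j = 0 := by
      intro i hi
      have : v i = 0 := pow_eq_zero_iff hk.ne' |>.mp (hv0 i hi)
      rw [this, zero_pow hj0.ne', mul_zero]
    rw [Finset.sum_eq_zero hz, ← hV0, zero_pow hk.ne', zero_pow hj0.ne', mul_zero]
  set w₁ : ℝ := ((k-j : ℕ) : ℝ) / k with hw₁
  set w₂ : ℝ := (j : ℝ) / k with hw₂
  have hkR : (0:ℝ) < k := by exact_mod_cast hk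
  have hw₁nn : 0 ≤ w₁ := by positivity
  have hw₂nn : 0 ≤ w₂ := by positivity
  have hwsum : w₁ + w₂ = 1 := by
    rw [hw₁, hw₂, ← add_div, div_eq_one_iff_eq hkR.ne']
    push_cast [Nat.cast_sub hj]
    ring
  have e1 : (k:ℝ) * w₁ = ((k-j : ℕ):ℝ) := by rw [hw₁]; field_simp
  have e2 : (k:ℝ) * w₂ = (j:ℝ) := by rw [hw₂]; field_simp
  have key : ∑ i, u i ^ (k-j) * v i ^ j ≤ U ^ w₁ * V ^ w₂ := by
    have hterm : ∀ i ∈ (univ : Finset ι),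
        u i ^ (k-j) * v i ^ j ≤ U ^ w₁ * V ^ w₂ * (w₁ * (u i ^ k / U) + w₂ * (v i ^ k / V)) := by
      intro i _
      have h1 : (u i ^ k / U) ^ w₁ * (v i ^ k / V) ^ w₂
          ≤ w₁ * (u i ^ k / U) + w₂ * (v i ^ k / V) :=
        Real.geom_mean_le_arith_mean2_weighted hw₁nn hw₂nn
          (div_nonneg (pow_nonneg (hu i) k) hUnn) (div_nonneg (pow_nonneg (hv i) k) hVnn) hwsum
      have h2 : U ^ w₁ * V ^ w₂ * ((u i ^ k / U) ^ w₁ * (v i ^ k / V) ^ w₂)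
          = u i ^ (k-j) * v i ^ j := by
        calc U ^ w₁ * V ^ w₂ * ((u i ^ k / U) ^ w₁ * (v i ^ k / V) ^ w₂)
            = (U ^ w₁ * (u i ^ k / U) ^ w₁) * (V ^ w₂ * (v i ^ k / V) ^ w₂) := by ring
          _ = (U * (u i ^ k / U)) ^ w₁ * (V * (v i ^ k / V)) ^ w₂ := by
              rw [Real.mul_rpow hUnn (div_nonneg (pow_nonneg (hu i) k) hUnn), Real.mul_rpow hVnn (div_nonneg (pow_nonneg (hv i) k) hVnn)]
          _ = (u i ^ k) ^ w₁ * (v i ^ k) ^ w₂ := by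
              rw [mul_comm U, div_mul_cancel₀ _ hUpos.ne', mul_comm V,
                div_mul_cancel₀ _ hVpos.ne']
          _ = u i ^ (k-j) * v i ^ j := by
              rw [← Real.rpow_natCast (u i) k, ← Real.rpow_natCast (v i) k,
                ← Real.rpow_mul (hu i), ← Real.rpow_mul (hv i), e1, e2,
                Real.rpow_natCast, Real.rpow_natCast]
      calc u i ^ (k-j) * v i ^ j
          = U ^ w₁ * V ^ w₂ * ((u i ^ k / U) ^ w₁ * (v i ^ k / V) ^ w₂) := h2.symm
        _ ≤ U ^ w₁ * V ^ w₂ * (w₁ * (u i ^ k / U) + w₂ * (v i ^ k / V)) := by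
            apply mul_le_mul_of_nonneg_left h1 (by positivity)
    calc ∑ i, u i ^ (k-j) * v i ^ j
        ≤ ∑ i, U ^ w₁ * V ^ w₂ * (w₁ * (u i ^ k / U) + w₂ * (v i ^ k / V)) :=
          Finset.sum_le_sum hterm
      _ = U ^ w₁ * V ^ w₂ := by
          rw [← Finset.mul_sum, Finset.sum_add_distrib, ← Finset.mul_sum, ← Finset.mul_sum,
            ← Finset.sum_div, ← Finset.sum_div, ← hU, ← hV, div_self hUpos.ne',
            div_self hVpos.ne', mul_one, mul_one, hwsum, mul_one]
  calc (∑ i, u i ^ (k-j) * v i ^ j) ^ k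
      ≤ (U ^ w₁ * V ^ w₂) ^ k := by
        apply pow_le_pow_left₀ (Finset.sum_nonneg fun i _ => mul_nonneg (pow_nonneg (hu i) _) (pow_nonneg (hv i) _)) key
    _ = U ^ (k-j) * V ^ j := by
        rw [mul_pow, ← Real.rpow_natCast (U ^ w₁) k, ← Real.rpow_natCast (V ^ w₂) k,
          ← Real.rpow_mul hUnn, ← Real.rpow_mul hVnn, mul_comm w₁, mul_comm w₂, e1, e2,
          Real.rpow_natCast, Real.rpow_natCast]

lemma key_hyper (k : ℕ) (hk : 0 < k) : ∀ (n : ℕ) (c : (Fin n → Bool) → ℝ),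
    ∑ x : Fin n → Bool, (∑ w : Fin n → Bool, c w * chi w x) ^ (2*k)
      ≤ 2^n * (∑ w : Fin n → Bool, ((2*k-1 : ℕ):ℝ) ^ hammingWt w * c w ^ 2) ^ k := by
  intro n
  induction n with
  | zero =>
    intro c
    simp only [Finset.univ_unique, Finset.sum_singleton]
    simp [chi, hammingWt, pow_mul]
  | succ n ih =>
    intro c
    set K : ℝ := ((2*k-1 : ℕ):ℝ) with hK
    have hKnn : (0:ℝ) ≤ K := Nat.cast_nonneg _
    set c0 : (Fin n → Bool) → ℝ := fun w' => c (Fin.cons false w') with hc0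
    set c1 : (Fin n → Bool) → ℝ := fun w' => c (Fin.cons true w') with hc1
    set A : (Fin n → Bool) → ℝ := fun x' => ∑ w', c0 w' * chi w' x' with hA
    set B : (Fin n → Bool) → ℝ := fun x' => ∑ w', c1 w' * chi w' x' with hB
    set S0 : ℝ := ∑ w', K ^ hammingWt w' * c0 w' ^ 2 with hS0
    set S1 : ℝ := ∑ w', K ^ hammingWt w' * c1 w' ^ 2 with hS1
    have hS0nn : 0 ≤ S0 :=
      sum_nonneg fun w' _ => mul_nonneg (pow_nonneg hKnn _) (sq_nonneg _)
    have hS1nn : 0 ≤ S1 :=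
      sum_nonneg fun w' _ => mul_nonneg (pow_nonneg hKnn _) (sq_nonneg _)
    have hF : ∀ (s : Bool) (x' : Fin n → Bool),
        (∑ w : Fin (n+1) → Bool, c w * chi w (Fin.cons s x'))
          = A x' + (if s then (-1:ℝ) else 1) * B x' := by
      intro s x'
      rw [sum_cube_succ (fun w => c w * chi w (Fin.cons s x'))]
      have t1 : ∀ w' : Fin n → Bool,
          c (Fin.cons false w') * chi (Fin.cons false w') (Fin.cons s x')
            = c0 w' * chi w' x' := by
        intro w'; rw [chi_cons]; cases s <;> simp [hc0]
      have t2 : ∀ w' : Fin n → Bool,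
          c (Fin.cons true w') * chi (Fin.cons true w') (Fin.cons s x')
            = (if s then (-1:ℝ) else 1) * (c1 w' * chi w' x') := by
        intro w'; rw [chi_cons]; cases s <;> simp [hc1] <;> ring
      simp only [t1, t2]
      rw [← Finset.mul_sum]
    have step2 : ∑ x : Fin (n+1) → Bool, (∑ w : Fin (n+1) → Bool, c w * chi w x) ^ (2*k)
        = ∑ x' : Fin n → Bool, ((A x' + B x')^(2*k) + (A x' - B x')^(2*k)) := by
      rw [sum_cube_succ (fun x => (∑ w : Fin (n+1) → Bool, c w * chi w x) ^ (2*k)),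
        ← Finset.sum_add_distrib]
      refine Finset.sum_congr rfl fun x' _ => ?_
      rw [hF false x', hF true x']
      norm_num
      ring
    have hIH0 : ∑ x', ((A x')^2)^k ≤ 2^n * S0^k := by
      calc ∑ x', ((A x')^2)^k = ∑ x', (A x')^(2*k) :=
            Finset.sum_congr rfl fun x' _ => (pow_mul _ 2 k).symm
        _ ≤ 2^n * S0^k := ih c0
    have hIH1 : ∑ x', ((B x')^2)^k ≤ 2^n * S1^k := by
      calc ∑ x', ((B x')^2)^k = ∑ x', (B x')^(2*k) :=
            Finset.sum_congr rfl fun x' _ => (pow_mul _ 2 k).symm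
        _ ≤ 2^n * S1^k := ih c1
    have claim : ∀ j ∈ range (k+1),
        ∑ x', ((A x')^2)^(k-j) * ((B x')^2)^j ≤ 2^n * (S0^(k-j) * S1^j) := by
      intro j hj
      have hjk : j ≤ k := Nat.lt_succ_iff.mp (mem_range.mp hj)
      have h1 := holder_pow (fun x' => (A x')^2) (fun x' => (B x')^2)
        (fun _ => sq_nonneg _) (fun _ => sq_nonneg _) hk hjk
      have hAnn : (0:ℝ) ≤ ∑ x', ((A x')^2)^k := sum_nonneg fun x' _ => by positivity
      have hBnn : (0:ℝ) ≤ ∑ x', ((B x')^2)^k := sum_nonneg fun x' _ => by positivity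
      have h2 : (∑ x', ((A x')^2)^k)^(k-j) * (∑ x', ((B x')^2)^k)^j
          ≤ (2^n * S0^k)^(k-j) * (2^n * S1^k)^j := by
        apply mul_le_mul (pow_le_pow_left₀ hAnn hIH0 _) (pow_le_pow_left₀ hBnn hIH1 _)
          (pow_nonneg hBnn _)
          (pow_nonneg (mul_nonneg (by positivity) (pow_nonneg hS0nn k)) _)
      have h3 : (2^n * S0^k)^(k-j) * ((2:ℝ)^n * S1^k)^j = (2^n * (S0^(k-j) * S1^j))^k := by
        rw [mul_pow, mul_pow, mul_pow, mul_pow, ← pow_mul, ← pow_mul, ← pow_mul, ← pow_mul]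
        have e2 : ((2:ℝ)^n)^k = 2^(n*(k-j)) * 2^(n*j) := by
          rw [← pow_add, ← pow_mul]
          congr 1
          rw [← Nat.mul_add, Nat.sub_add_cancel hjk]
        rw [e2, ← pow_mul, ← pow_mul, Nat.mul_comm (k-j) k, Nat.mul_comm j k]
        ring
      have hXnn : (0:ℝ) ≤ ∑ x', ((A x')^2)^(k-j) * ((B x')^2)^j :=
        sum_nonneg fun x' _ => by positivity
      have hYnn : (0:ℝ) ≤ 2^n * (S0^(k-j) * S1^j) := by positivity
      refine le_of_pow_le_pow_left₀ hk.ne' hYnn ?_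
      calc (∑ x', ((A x')^2)^(k-j) * ((B x')^2)^j)^k
          ≤ (∑ x', ((A x')^2)^k)^(k-j) * (∑ x', ((B x')^2)^k)^j := h1
        _ ≤ (2^n * S0^k)^(k-j) * (2^n * S1^k)^j := h2
        _ = (2^n * (S0^(k-j) * S1^j))^k := h3
    have expand : ∀ x' : Fin n → Bool,
        ((A x')^2 + K * (B x')^2)^k
          = ∑ j ∈ range (k+1), (K*(B x')^2)^j * ((A x')^2)^(k-j) * (k.choose j : ℝ) := by
      intro x'
      rw [add_comm, add_pow]
    calc ∑ x : Fin (n+1) → Bool, (∑ w : Fin (n+1) → Bool, c w * chi w x) ^ (2*k)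
        = ∑ x' : Fin n → Bool, ((A x' + B x')^(2*k) + (A x' - B x')^(2*k)) := step2
      _ ≤ ∑ x' : Fin n → Bool, 2 * ((A x')^2 + K * (B x')^2)^k :=
          Finset.sum_le_sum fun x' _ => two_point k (A x') (B x')
      _ = 2 * ∑ x', ∑ j ∈ range (k+1), (K*(B x')^2)^j * ((A x')^2)^(k-j) * (k.choose j : ℝ) := by
          rw [← Finset.mul_sum]
          congr 1
          exact Finset.sum_congr rfl fun x' _ => expand x'
      _ = 2 * ∑ j ∈ range (k+1), (k.choose j : ℝ) * K^j *
            ∑ x', ((A x')^2)^(k-j) * ((B x')^2)^j := by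
          rw [Finset.sum_comm]
          congr 1
          refine Finset.sum_congr rfl fun j _ => ?_
          rw [Finset.mul_sum]
          refine Finset.sum_congr rfl fun x' _ => ?_
          rw [mul_pow]
          ring
      _ ≤ 2 * ∑ j ∈ range (k+1), (k.choose j : ℝ) * K^j * (2^n * (S0^(k-j) * S1^j)) := by
          apply mul_le_mul_of_nonneg_left _ (by norm_num)
          apply Finset.sum_le_sum
          intro j hj
          exact mul_le_mul_of_nonneg_left (claim j hj)
            (mul_nonneg (Nat.cast_nonneg _) (pow_nonneg hKnn _))
      _ = 2^(n+1) * ∑ j ∈ range (k+1), (K*S1)^j * S0^(k-j) * (k.choose j : ℝ) := by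
          rw [Finset.mul_sum, Finset.mul_sum]
          refine Finset.sum_congr rfl fun j _ => ?_
          rw [mul_pow, pow_succ]
          ring
      _ = 2^(n+1) * (S0 + K*S1)^k := by rw [add_comm S0, add_pow]
      _ = 2^(n+1) * (∑ w : Fin (n+1) → Bool, K ^ hammingWt w * c w ^ 2) ^ k := by
          congr 2
          rw [sum_cube_succ (fun w => K ^ hammingWt w * c w ^ 2)]
          have e0 : ∀ w' : Fin n → Bool,
              K ^ hammingWt (Fin.cons false w') * c (Fin.cons false w') ^ 2
                = K ^ hammingWt w' * c0 w' ^ 2 := by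
            intro w'; rw [hammingWt_cons]; simp [hc0]
          have e1 : ∀ w' : Fin n → Bool,
              K ^ hammingWt (Fin.cons true w') * c (Fin.cons true w') ^ 2
                = K * (K ^ hammingWt w' * c1 w' ^ 2) := by
            intro w'; rw [hammingWt_cons]; simp [hc1, pow_add, pow_one]; ring
          simp only [e0, e1]
          rw [← Finset.mul_sum]

theorem level_two_weight_bound :
    ∃ C : ℝ, 0 < C ∧ ∀ (n : ℕ) (f : (Fin n → Bool) → ℝ) (M : ℝ), 2 ≤ M →
      (∑ x : Fin n → Bool, |f x|) / 2 ^ n = 1 → (∀ x, |f x| ≤ M) →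
      ∑ w ∈ univ.filter (fun w => hammingWt w = 2), boolFourier f w ^ 2
        ≤ C * Real.log M ^ 2 := by
  refine ⟨256, by norm_num, ?_⟩
  intro n f M hM hf1 hfM
  have hM0 : (0:ℝ) < M := lt_of_lt_of_le two_pos hM
  set L : ℝ := Real.log M with hL
  have hlog2 : (0.6931471803:ℝ) < Real.log 2 := Real.log_two_gt_d9
  have hL2 : Real.log 2 ≤ L := Real.log_le_log two_pos hM
  have hL0 : (0:ℝ) < L := lt_of_lt_of_le (by linarith) hL2
  -- choose k
  set k : ℕ := ⌈(L+1)/2⌉₊ with hkdef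
  have hk0 : 0 < k := Nat.ceil_pos.mpr (by positivity)
  set K : ℝ := ((2*k-1 : ℕ):ℝ) with hKdef
  have hKcast : K = 2*(k:ℝ) - 1 := by
    rw [hKdef, Nat.cast_sub (by omega)]
    push_cast
    ring
  have hkceil : (L+1)/2 ≤ (k:ℝ) := Nat.le_ceil _
  have hKL : L ≤ K := by rw [hKcast]; linarith
  have hk1 : (1:ℝ) ≤ (k:ℝ) := by exact_mod_cast hk0
  have hK1 : (1:ℝ) ≤ K := by rw [hKcast]; linarith
  have hK0 : (0:ℝ) < K := by linarith
  have hkceil2 : (k:ℝ) < (L+1)/2 + 1 := Nat.ceil_lt_add_one (by positivity)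
  have hK4 : K ≤ 4*L := by rw [hKcast]; linarith
  -- coefficients
  set c : (Fin n → Bool) → ℝ := fun w => if hammingWt w = 2 then boolFourier f w else 0
    with hcdef
  set g : (Fin n → Bool) → ℝ := fun x => ∑ w : Fin n → Bool, c w * chi w x with hgdef
  set W : ℝ := ∑ w : Fin n → Bool, c w ^ 2 with hWdef
  have hWnn : 0 ≤ W := sum_nonneg fun w _ => sq_nonneg _
  have htarget : ∑ w ∈ univ.filter (fun w => hammingWt w = 2), boolFourier f w ^ 2 = W := by
    rw [hWdef, Finset.sum_filter]
    refine Finset.sum_congr rfl fun w _ => ?_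
    by_cases h : hammingWt w = 2 <;> simp [hcdef, h]
  -- Parseval: ∑ f g = 2^n W
  have hfw : ∀ w : Fin n → Bool, ∑ x, chi w x * f x = 2^n * boolFourier f w := by
    intro w
    simp only [boolFourier, chi]
    field_simp
  have hfg : ∑ x, f x * g x = 2^n * W := by
    have h1 : ∑ x, f x * g x = ∑ w : Fin n → Bool, c w * ∑ x, chi w x * f x := by
      calc ∑ x, f x * g x
          = ∑ x : Fin n → Bool, ∑ w : Fin n → Bool, c w * (chi w x * f x) := by
            refine Finset.sum_congr rfl fun x _ => ?_
            simp only [hgdef]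
            rw [Finset.mul_sum]
            exact Finset.sum_congr rfl fun w _ => by ring
        _ = ∑ w : Fin n → Bool, ∑ x : Fin n → Bool, c w * (chi w x * f x) := Finset.sum_comm
        _ = ∑ w : Fin n → Bool, c w * ∑ x, chi w x * f x := by
            refine Finset.sum_congr rfl fun w _ => (Finset.mul_sum _ _ _).symm
    rw [h1]
    have h2 : ∀ w : Fin n → Bool, c w * (2^n * boolFourier f w) = 2^n * c w ^2 := by
      intro w
      by_cases h : hammingWt w = 2 <;> simp [hcdef, h] <;> ring
    calc ∑ w : Fin n → Bool, c w * ∑ x, chi w x * f x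
        = ∑ w : Fin n → Bool, 2^n * c w ^ 2 := by
          refine Finset.sum_congr rfl fun w _ => ?_
          rw [hfw w, h2 w]
      _ = 2^n * W := by rw [← Finset.mul_sum, hWdef]
  -- hypercontractive bound
  have hSK : ∑ w : Fin n → Bool, K ^ hammingWt w * c w ^ 2 = K^2 * W := by
    rw [hWdef, Finset.mul_sum]
    refine Finset.sum_congr rfl fun w _ => ?_
    by_cases h : hammingWt w = 2
    · rw [h]
    · simp [hcdef, h]
  have hE : ∑ x, g x ^ (2*k) ≤ 2^n * (K^(2*k) * W^k) := by
    calc ∑ x, g x ^ (2*k) ≤ 2^n * (∑ w : Fin n → Bool, K ^ hammingWt w * c w ^ 2) ^ k :=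
          key_hyper k hk0 n c
      _ = 2^n * (K^(2*k) * W^k) := by rw [hSK, mul_pow, ← pow_mul]
  -- conclude
  rw [htarget]
  rcases eq_or_lt_of_le hWnn with hW0 | hWpos
  · rw [← hW0]; positivity
  set s : ℝ := Real.sqrt W with hsdef
  have hs0 : 0 < s := Real.sqrt_pos.mpr hWpos
  have hs2 : s^2 = W := Real.sq_sqrt hWnn
  set t : ℝ := 3 * K * s with htdef
  have ht0 : 0 < t := mul_pos (mul_pos (by norm_num : (0:ℝ) < 3) hK0) hs0
  have h2n : (0:ℝ) < 2^n := by positivity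
  have hf1' : ∑ x : Fin n → Bool, |f x| = 2^n := by
    field_simp at hf1
    linarith [hf1]
  clear_value k K c g W s t
  -- pointwise bound
  have hpt : ∀ x : Fin n → Bool, f x * g x ≤ |f x| * t + M * (g x ^ (2*k) / t^(2*k-1)) := by
    intro x
    have h0 : f x * g x ≤ |f x| * |g x| := by
      calc f x * g x ≤ |f x * g x| := le_abs_self _
        _ = |f x| * |g x| := abs_mul _ _
    rcases le_or_gt (|g x|) t with hgt | hgt
    · have : |f x| * |g x| ≤ |f x| * t := mul_le_mul_of_nonneg_left hgt (abs_nonneg _)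
      have hnn : 0 ≤ M * (g x ^ (2*k) / t^(2*k-1)) := by
        apply mul_nonneg hM0.le
        apply div_nonneg _ (pow_nonneg ht0.le _)
        rw [pow_mul]
        exact pow_nonneg (sq_nonneg _) k
      linarith
    · have habs : |g x| ≤ g x ^ (2*k) / t^(2*k-1) := by
        rw [le_div_iff₀ (pow_pos ht0 _)]
        have h1 : t^(2*k-1) ≤ |g x|^(2*k-1) := pow_le_pow_left₀ ht0.le hgt.le _
        have h2 : |g x| * |g x|^(2*k-1) = |g x|^(2*k) := by
          rw [← pow_succ']
          congr 1
          omega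
        have h3 : |g x|^(2*k) = g x ^ (2*k) := by
          rw [pow_mul, pow_mul, sq_abs]
        calc |g x| * t^(2*k-1) ≤ |g x| * |g x|^(2*k-1) :=
              mul_le_mul_of_nonneg_left h1 (abs_nonneg _)
          _ = g x ^ (2*k) := by rw [h2, h3]
      have : |f x| * |g x| ≤ M * (g x ^ (2*k) / t^(2*k-1)) := by
        calc |f x| * |g x| ≤ M * |g x| := mul_le_mul_of_nonneg_right (hfM x) (abs_nonneg _)
          _ ≤ M * (g x ^ (2*k) / t^(2*k-1)) := mul_le_mul_of_nonneg_left habs hM0.le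
      have hnn : 0 ≤ |f x| * t := mul_nonneg (abs_nonneg _) ht0.le
      linarith
  -- summed bound
  have hsum : 2^n * W ≤ 2^n * (t + M * ((K^(2*k) * W^k) / t^(2*k-1))) := by
    calc 2^n * W = ∑ x, f x * g x := hfg.symm
      _ ≤ ∑ x : Fin n → Bool, (|f x| * t + M * (g x ^ (2*k) / t^(2*k-1))) :=
          Finset.sum_le_sum fun x _ => hpt x
      _ = (∑ x : Fin n → Bool, |f x|) * t
            + M * ((∑ x, g x ^ (2*k)) / t^(2*k-1)) := by
          rw [Finset.sum_add_distrib, ← Finset.sum_mul, ← Finset.mul_sum, ← Finset.sum_div]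
      _ ≤ 2^n * t + M * ((2^n * (K^(2*k) * W^k)) / t^(2*k-1)) := by
          rw [hf1']
          refine add_le_add le_rfl (mul_le_mul_of_nonneg_left ?_ hM0.le)
          exact div_le_div_of_nonneg_right hE (pow_nonneg ht0.le _)
      _ = 2^n * (t + M * ((K^(2*k) * W^k) / t^(2*k-1))) := by ring
  have hW1 : W ≤ t + M * ((K^(2*k) * W^k) / t^(2*k-1)) :=
    le_of_mul_le_mul_left hsum h2n
  have hWk : W^k = s^(2*k-1) * s := by
    rw [← hs2, ← pow_mul, ← pow_succ]
    congr 1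
    omega
  have htpow : t^(2*k-1) = 3^(2*k-1) * K^(2*k-1) * s^(2*k-1) := by
    rw [htdef, mul_pow, mul_pow]
  have hKpow : K^(2*k) = K^(2*k-1) * K := by
    rw [← pow_succ]
    congr 1
    omega
  have hterm : M * ((K^(2*k) * W^k) / t^(2*k-1)) = (M / 3^(2*k-1)) * (K * s) := by
    rw [hWk, htpow, hKpow]
    have hs_ne : s^(2*k-1) ≠ 0 := pow_ne_zero _ hs0.ne'
    have hK_ne : K^(2*k-1) ≠ 0 := pow_ne_zero _ hK0.ne'
    field_simp
  have hlog3 : (1:ℝ) ≤ Real.log 3 := by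
    rw [Real.le_log_iff_exp_le (by norm_num)]
    calc Real.exp 1 ≤ 2.7182818286 := Real.exp_one_lt_d9.le
      _ ≤ 3 := by norm_num
  have hM3 : M ≤ 3^(2*k-1) := by
    have hMexp : M = Real.exp L := (Real.exp_log hM0).symm
    have h31 : (3:ℝ)^(2*k-1) = Real.exp (Real.log 3 * ((2*k-1:ℕ):ℝ)) := by
      rw [← Real.rpow_natCast 3 (2*k-1), Real.rpow_def_of_pos (by norm_num)]
    rw [hMexp, h31]
    apply Real.exp_le_exp.mpr
    calc L ≤ K := hKL
      _ ≤ K * Real.log 3 := le_mul_of_one_le_right hK0.le hlog3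
      _ = Real.log 3 * ((2*k-1:ℕ):ℝ) := by rw [hKdef]; ring
  have hfinal : W ≤ 4*K*s := by
    have hd1 : M / 3^(2*k-1) ≤ 1 := (div_le_one (by positivity)).mpr hM3
    have hd2 : (M/3^(2*k-1)) * (K*s) ≤ 1 * (K*s) :=
      mul_le_mul_of_nonneg_right hd1 (mul_nonneg hK0.le hs0.le)
    calc W ≤ t + M * ((K^(2*k) * W^k) / t^(2*k-1)) := hW1
      _ = t + (M/3^(2*k-1)) * (K*s) := by rw [hterm]
      _ ≤ t + 1*(K*s) := add_le_add le_rfl hd2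
      _ = 4*K*s := by rw [htdef]; ring
  have hsK : s ≤ 4*K := by
    have hss : s * s ≤ (4*K) * s := by
      calc s * s = W := by rw [← hs2]; ring
        _ ≤ 4*K*s := hfinal
    exact le_of_mul_le_mul_right hss hs0
  calc W = s^2 := hs2.symm
    _ ≤ (4*K)^2 := pow_le_pow_left₀ hs0.le hsK 2
    _ ≤ (16*L)^2 := pow_le_pow_left₀ (by linarith) (by linarith) 2
    _ = 256 * Real.log M ^ 2 := by rw [← hL]; ring
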